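/- Let K be a field with more than 3 elements. Then the group PSL(2,K) is simple. -/

import Mathlib

open Matrix

namespace Stmt2Aux

variable {K : Type*} [Field K]

abbrev SL2 (K : Type*) [Field K] := Matrix.SpecialLinearGroup (Fin 2) K

def u (t : K) : SL2 K := ⟨!![1, t; 0, 1], by simp [Matrix.det_fin_two_of]⟩
def lw (t : K) : SL2 K := ⟨!![1, 0; t, 1], by simp [Matrix.det_fin_two_of]⟩
def wm : SL2 K := ⟨!![0, 1; -1, 0], by simp [Matrix.det_fin_two_of]⟩
def dg (a : K) (ha : a ≠ 0) : SL2 K := ⟨!![a, 0; 0, a⁻¹], by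
  rw [Matrix.det_fin_two_of]; field_simp; ring⟩
def cm (c τ : K) (hc : c ≠ 0) : SL2 K := ⟨!![0, -c; c⁻¹, τ], by
  rw [Matrix.det_fin_two_of]; field_simp; ring⟩
def lt (r s : K) (hr : r ≠ 0) : SL2 K := ⟨!![r, 0; s, r⁻¹], by
  rw [Matrix.det_fin_two_of]; field_simp; ring⟩

lemma u_add (s t : K) : u s * u t = u (s + t) := by
  apply Subtype.ext
  simp only [Matrix.SpecialLinearGroup.coe_mul]; simp only [u]
  ext i j
  fin_cases i <;> fin_cases j <;>
    (simp [Matrix.mul_apply, Fin.sum_univ_two]; try ring)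

lemma lw_add (s t : K) : lw s * lw t = lw (s + t) := by
  apply Subtype.ext
  simp only [Matrix.SpecialLinearGroup.coe_mul]; simp only [lw]
  ext i j
  fin_cases i <;> fin_cases j <;>
    (simp [Matrix.mul_apply, Fin.sum_univ_two]; try ring)

lemma u_zero : u (0 : K) = 1 := by
  apply Subtype.ext
  simp [u]
  ext i j
  fin_cases i <;> fin_cases j <;> simp [Matrix.one_apply]

lemma lw_zero : lw (0 : K) = 1 := by
  apply Subtype.ext
  simp [lw]
  ext i j
  fin_cases i <;> fin_cases j <;> simp [Matrix.one_apply]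

lemma u_wm (t : K) : u t * wm = wm * lw (-t) := by
  apply Subtype.ext
  simp only [Matrix.SpecialLinearGroup.coe_mul]; simp only [u, wm, lw]
  ext i j
  fin_cases i <;> fin_cases j <;>
    (simp [Matrix.mul_apply, Fin.sum_univ_two]; try ring)

/-- If `C ∈ N`, `N` normal, and `X * g = g * C`, then `X ∈ N` (as `X = g C g⁻¹`). -/
lemma conj_helper {N : Subgroup (SL2 K)} (hN : N.Normal) {C X g : SL2 K}
    (hC : C ∈ N) (h : X * g = g * C) : X ∈ N := by
  have e : X = g * C * g⁻¹ := by
    rw [eq_mul_inv_iff_mul_eq]; exact h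
  rw [e]; exact hN.conj_mem C hC g

/-- If `M ∈ N`, `N` normal, and `M * g = g * X`, then `X ∈ N` (as `X = g⁻¹ M g`). -/
lemma conj_helper' {N : Subgroup (SL2 K)} (hN : N.Normal) {M X g : SL2 K}
    (hM : M ∈ N) (h : M * g = g * X) : X ∈ N := by
  have e : g * X = g * (g⁻¹ * M * g⁻¹⁻¹) := by rw [← h]; group
  rw [mul_left_cancel e]
  exact hN.conj_mem M hM g⁻¹



-- scalar matrices are central
lemma mem_center_of_scalar (A : SL2 K) (a : K) (hA : A.val = !![a, 0; 0, a]) :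
    A ∈ Subgroup.center (SL2 K) := by
  rw [Subgroup.mem_center_iff]
  intro g
  apply Subtype.ext
  simp only [Matrix.SpecialLinearGroup.coe_mul, hA]
  ext i j
  fin_cases i <;> fin_cases j <;>
    (simp [Matrix.mul_apply, Fin.sum_univ_two]; try ring)

-- Step 1: a noncentral element of a normal subgroup has a conjugate with
-- nonzero lower-left entry.
lemma exists_lowerleft_ne {N : Subgroup (SL2 K)} (hN : N.Normal) {A : SL2 K}
    (hA : A ∈ N) (hAc : A ∉ Subgroup.center (SL2 K)) :
    ∃ M ∈ N, M.val 1 0 ≠ 0 := by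
  by_cases h1 : A.val 1 0 ≠ 0
  · exact ⟨A, hA, h1⟩
  push_neg at h1
  by_cases h2 : A.val 0 1 ≠ 0
  · refine ⟨wm * A * wm⁻¹, hN.conj_mem A hA wm, ?_⟩
    have hval : (wm * A * wm⁻¹).val = wm.val * A.val * adjugate wm.val := by
      simp [Matrix.SpecialLinearGroup.coe_mul, Matrix.SpecialLinearGroup.coe_inv]
    rw [hval]
    simp only [wm, adjugate_fin_two]
    simp [Matrix.mul_apply, Matrix.vecMul, dotProduct, Fin.sum_univ_two]
    exact h2
  push_neg at h2
  by_cases h3 : A.val 0 0 = A.val 1 1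
  · exact absurd (mem_center_of_scalar A (A.val 0 0) (by
      ext i j; fin_cases i <;> fin_cases j <;> simp [h1, h2, h3.symm])) hAc
  · refine ⟨lw 1 * A * (lw 1)⁻¹, hN.conj_mem A hA (lw 1), ?_⟩
    have hval : (lw 1 * A * (lw 1)⁻¹).val = (lw 1).val * A.val * adjugate (lw 1).val := by
      simp [Matrix.SpecialLinearGroup.coe_mul, Matrix.SpecialLinearGroup.coe_inv]
    have e : (((lw 1).val * A.val * adjugate (lw 1).val : Matrix (Fin 2) (Fin 2) K)) 1 0 = A.val 0 0 - A.val 1 1 := by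
      simp only [lw, adjugate_fin_two]
      simp [Matrix.mul_apply, Matrix.vecMul, dotProduct, Fin.sum_univ_two, h1, h2]
      ring
    rw [hval, e]
    exact sub_ne_zero.mpr h3



-- lw's give u's
lemma u_mem {N : Subgroup (SL2 K)} (hN : N.Normal) (hl : ∀ t : K, lw t ∈ N)
    (t : K) : u t ∈ N :=
  conj_helper hN (hl (-t)) (u_wm t)

-- generation: if N contains all lw's (hence all u's) then N is everything
lemma eq_top {N : Subgroup (SL2 K)} (hN : N.Normal) (hl : ∀ t : K, lw t ∈ N) :
    ∀ g : SL2 K, g ∈ N := by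
  have hu := u_mem hN hl
  have main : ∀ g : SL2 K, g.val 1 0 ≠ 0 → g ∈ N := by
    intro g
    induction g using Matrix.SpecialLinearGroup.fin_two_induction with
    | _ a b c d hdet =>
    intro hc
    have hc' : c ≠ 0 := by simpa using hc
    have hg : (⟨!![a, b; c, d], by rwa [det_fin_two_of]⟩ : SL2 K)
        = u ((a - 1) / c) * lw c * u ((d - 1) / c) := by
      apply Subtype.ext
      simp only [Matrix.SpecialLinearGroup.coe_mul]; simp only [u, lw]
      ext i j
      fin_cases i <;> fin_cases j <;>
        simp [Matrix.mul_apply, Fin.sum_univ_two]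
      all_goals try field_simp
      all_goals try ring
      all_goals try linear_combination hdet
      all_goals try linear_combination -hdet
      all_goals try linear_combination c * hdet
      all_goals try linear_combination -c * hdet
    rw [hg]
    exact N.mul_mem (N.mul_mem (hu _) (hl c)) (hu _)
  intro g
  by_cases hc : g.val 1 0 ≠ 0
  · exact main g hc
  · push_neg at hc
    have hd : g.val 1 1 ≠ 0 := by
      intro hd
      have := g.2
      rw [det_fin_two] at this
      rw [hc, hd] at this
      simp at this
    have h2 : (g * lw 1).val 1 0 ≠ 0 := by
      have : (g * lw 1).val = g.val * (lw 1).val := by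
        simp [Matrix.SpecialLinearGroup.coe_mul]
      rw [this]
      simpa [lw, Matrix.mul_apply, Fin.sum_univ_two, hc] using hd
    have := N.mul_mem (main _ h2) (N.inv_mem (hl 1))
    simpa [mul_assoc] using this

-- companion form
lemma companion {N : Subgroup (SL2 K)} (hN : N.Normal) {M : SL2 K}
    (hM : M ∈ N) (hc : M.val 1 0 ≠ 0) :
    ∃ (c τ : K) (hc0 : c ≠ 0), cm c τ hc0 ∈ N := by
  induction M using Matrix.SpecialLinearGroup.fin_two_induction with
  | _ a b c d hdet =>
  have hc' : c ≠ 0 := by simpa using hc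
  refine ⟨c, a + d, hc', ?_⟩
  refine conj_helper' hN hM (g := ⟨!![c⁻¹, a; 0, c], by
      rw [det_fin_two_of]; field_simp; ring⟩) ?_
  apply Subtype.ext
  erw [Matrix.SpecialLinearGroup.coe_mul, Matrix.SpecialLinearGroup.coe_mul]; simp only [cm]
  ext i j
  fin_cases i <;> fin_cases j <;>
    simp [Matrix.mul_apply, Fin.sum_univ_two]
  all_goals try field_simp
  all_goals try ring
  all_goals try linear_combination hdet
  all_goals try linear_combination -hdet
  all_goals try linear_combination c * hdet
  all_goals try linear_combination -c * hdet

-- the D-step: from a companion matrix, lower triangular elements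
lemma Dmem {N : Subgroup (SL2 K)} (hN : N.Normal) {c τ : K} {hc : c ≠ 0}
    (hcm : cm c τ hc ∈ N) {a : K} (ha : a ≠ 0) :
    lt (a ^ 2) (τ * c⁻¹ * ((a⁻¹) ^ 2 - 1)) (pow_ne_zero 2 ha) ∈ N := by
  have e : lt (a ^ 2) (τ * c⁻¹ * ((a⁻¹) ^ 2 - 1)) (pow_ne_zero 2 ha) * (cm c τ hc * dg a ha)
      = dg a ha * cm c τ hc := by
    apply Subtype.ext
    simp only [Matrix.SpecialLinearGroup.coe_mul]; simp only [lt, cm, dg]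
    ext i j
    fin_cases i <;> fin_cases j <;>
      simp [Matrix.mul_apply, Fin.sum_univ_two]
    all_goals try field_simp
    all_goals try ring
    all_goals try (field_simp; ring)
  have e2' : lt (a ^ 2) (τ * c⁻¹ * ((a⁻¹) ^ 2 - 1)) (pow_ne_zero 2 ha) * (cm c τ hc * dg a ha)
      = ((dg a ha * cm c τ hc * (dg a ha)⁻¹) * (cm c τ hc)⁻¹) * (cm c τ hc * dg a ha) := by
    rw [e]; group
  rw [mul_right_cancel e2']
  exact N.mul_mem (hN.conj_mem _ hcm _) (N.inv_mem hcm)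

-- commutator of lower triangular with lw
lemma lw_step {N : Subgroup (SL2 K)} (hN : N.Normal) {r s : K} {hr : r ≠ 0}
    (hT : lt r s hr ∈ N) (x : K) : lw (((r⁻¹) ^ 2 - 1) * x) ∈ N := by
  have e : lw (((r⁻¹) ^ 2 - 1) * x) * (lw x * lt r s hr) = lt r s hr * lw x := by
    apply Subtype.ext
    simp only [Matrix.SpecialLinearGroup.coe_mul]; simp only [lt, lw]
    ext i j
    fin_cases i <;> fin_cases j <;>
      simp [Matrix.mul_apply, Fin.sum_univ_two]
    all_goals try field_simp
    all_goals try ring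
  have e2' : lw (((r⁻¹) ^ 2 - 1) * x) * (lw x * lt r s hr)
      = (lt r s hr * (lw x * (lt r s hr)⁻¹ * (lw x)⁻¹)) * (lw x * lt r s hr) := by
    rw [e]; group
  rw [mul_right_cancel e2']
  exact N.mul_mem hT (hN.conj_mem _ (N.inv_mem hT) _)

-- all lw's from companion + a with a^4 ≠ 1
lemma lw_all {N : Subgroup (SL2 K)} (hN : N.Normal) {c τ : K} {hc : c ≠ 0}
    (hcm : cm c τ hc ∈ N) {a : K} (ha : a ≠ 0) (ha4 : a ^ 4 ≠ 1) :
    ∀ s : K, lw s ∈ N := by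
  intro s
  have hD := Dmem hN hcm ha
  have hfac : (((a ^ 2)⁻¹) ^ 2 - 1) ≠ 0 := by
    intro h
    apply ha4
    have h4 : ((a ^ 2) ^ 2)⁻¹ = 1 := by
      rw [sub_eq_zero] at h
      rw [← inv_pow]
      exact h
    rw [inv_eq_one] at h4
    rw [← h4]; ring
  have := lw_step hN hD (s / (((a ^ 2)⁻¹) ^ 2 - 1))
  rwa [mul_div_cancel₀ _ hfac] at this



lemma mk_le_three {s0 s1 s2 : K} (h : ∀ x : K, x = s0 ∨ x = s1 ∨ x = s2) :
    Cardinal.mk K ≤ 3 := by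
  have hsub : (Set.univ : Set K) ⊆ {s0, s1, s2} := by
    intro x _; rcases h x with h | h | h <;> simp [h]
  calc Cardinal.mk K = Cardinal.mk (Set.univ : Set K) := Cardinal.mk_univ.symm
    _ ≤ Cardinal.mk ({s0, s1, s2} : Set K) := Cardinal.mk_le_mk_of_subset hsub
    _ ≤ Cardinal.mk ({s1, s2} : Set K) + 1 := Cardinal.mk_insert_le
    _ ≤ (Cardinal.mk ({s2} : Set K) + 1) + 1 := by
        gcongr
        exact Cardinal.mk_insert_le
    _ = 3 := by rw [Cardinal.mk_singleton]; norm_num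

lemma key (hK : 3 < Cardinal.mk K) {N : Subgroup (SL2 K)} (hN : N.Normal)
    {A : SL2 K} (hA : A ∈ N) (hAc : A ∉ Subgroup.center (SL2 K)) :
    ∀ g : SL2 K, g ∈ N := by
  obtain ⟨M, hM, hM10⟩ := exists_lowerleft_ne hN hA hAc
  obtain ⟨c, τ, hc, hcm⟩ := companion hN hM hM10
  by_cases hex : ∃ a : K, a ≠ 0 ∧ a ^ 4 ≠ 1
  · obtain ⟨a, ha, ha4⟩ := hex
    exact eq_top hN (lw_all hN hcm ha ha4)
  push_neg at hex
  -- characteristic is not 2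
  have h2 : (2 : K) ≠ 0 := by
    intro h20
    have h1 : ∀ x : K, x = 0 ∨ x = 1 := by
      intro x
      by_cases hx0 : x = 0
      · exact Or.inl hx0
      right
      by_contra hx1
      have hx1' : x + 1 ≠ 0 := by
        intro h; apply hx1; linear_combination h - h20
      have e1 : (x + 1) ^ 4 = 1 := hex _ hx1'
      have e2 : x ^ 4 = 1 := hex _ hx0
      have : (0 : K) = 1 := by
        rw [← e1]
        linear_combination -e2 + (-2*x^3 - 3*x^2 - 2*x - 1) * h20
      exact one_ne_zero this.symm
    have hle : Cardinal.mk K ≤ 3 := mk_le_three (s0 := 0) (s1 := 1) (s2 := 1)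
      (fun x => by rcases h1 x with h | h; exacts [Or.inl h, Or.inr (Or.inl h)])
    exact absurd hK (not_lt.mpr hle)
  have h15 : (15 : K) = 0 := by
    have := hex 2 h2
    linear_combination this
  -- characteristic is not 3
  have h3 : (3 : K) ≠ 0 := by
    intro h30
    have hex3 : ∃ a : K, a ≠ 0 ∧ a ≠ 1 ∧ a ≠ 2 := by
      by_contra hco
      push_neg at hco
      have hle : Cardinal.mk K ≤ 3 := mk_le_three (s0 := 0) (s1 := 1) (s2 := 2) (fun x => by
        by_cases h0 : x = 0
        · exact Or.inl h0
        by_cases h1 : x = 1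
        · exact Or.inr (Or.inl h1)
        · exact Or.inr (Or.inr (hco x h0 h1)))
      exact absurd hK (not_lt.mpr hle)
    obtain ⟨a, ha0, ha1, ha2⟩ := hex3
    have hsq : ∀ y : K, y ≠ 0 → y ≠ 1 → y ≠ 2 → y ^ 2 = -1 := by
      intro y hy0 hy1 hy2
      have h4 : (y ^ 2 - 1) * (y ^ 2 + 1) = 0 := by linear_combination hex y hy0
      rcases mul_eq_zero.mp h4 with h | h
      · exfalso
        have hf : (y - 1) * (y + 1) = 0 := by linear_combination h
        rcases mul_eq_zero.mp hf with h' | h'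
        · exact hy1 (by linear_combination h')
        · exact hy2 (by linear_combination h' - h30)
      · linear_combination h
    have hb0 : a + 1 ≠ 0 := fun h => ha2 (by linear_combination h - h30)
    have hb1 : a + 1 ≠ 1 := fun h => ha0 (by linear_combination h)
    have hb2 : a + 1 ≠ 2 := fun h => ha1 (by linear_combination h)
    have ea := hsq a ha0 ha1 ha2
    have eb := hsq (a + 1) hb0 hb1 hb2
    have e : 2 * a + 1 = 0 := by linear_combination eb - ea
    exact ha1 (by linear_combination 2 * e + (-a - 1) * h30)
  -- characteristic is 5
  have h5 : (5 : K) = 0 := by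
    have h35 : (3 : K) * 5 = 0 := by linear_combination h15
    rcases mul_eq_zero.mp h35 with h | h
    · exact absurd h h3
    · exact h
  have hnum : ∀ x : K, x = 0 ∨ x = 1 ∨ x = 2 ∨ x = 3 ∨ x = 4 := by
    intro x
    by_cases hx0 : x = 0
    · exact Or.inl hx0
    have h4 : (x - 1) * ((x - 2) * ((x - 3) * (x - 4))) = 0 := by
      linear_combination hex x hx0 + (-2*x^3 + 7*x^2 - 10*x + 5) * h5
    rcases mul_eq_zero.mp h4 with h | h
    · exact Or.inr (Or.inl (by linear_combination h))
    rcases mul_eq_zero.mp h with h | h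
    · exact Or.inr (Or.inr (Or.inl (by linear_combination h)))
    rcases mul_eq_zero.mp h with h | h
    · exact Or.inr (Or.inr (Or.inr (Or.inl (by linear_combination h))))
    · exact Or.inr (Or.inr (Or.inr (Or.inr (by linear_combination h))))
  -- from one nontrivial lw, all lw's (char 5)
  have hfive : ∀ t0 : K, t0 ≠ 0 → lw t0 ∈ N → ∀ s : K, lw s ∈ N := by
    intro t0 ht0 hl s
    have m2 : lw (t0 + t0) ∈ N := by rw [← lw_add]; exact N.mul_mem hl hl
    have m3 : lw (t0 + (t0 + t0)) ∈ N := by rw [← lw_add]; exact N.mul_mem hl m2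
    have m4 : lw (t0 + (t0 + (t0 + t0))) ∈ N := by rw [← lw_add]; exact N.mul_mem hl m3
    rcases hnum (s / t0) with h | h | h | h | h
    · have hs : s = 0 := by field_simp at h; simpa using h
      rw [hs, lw_zero]; exact N.one_mem
    · have hs : s = t0 := by field_simp at h; linear_combination h
      rwa [hs]
    · have hs : s = t0 + t0 := by field_simp at h; linear_combination h
      rw [hs]; exact m2
    · have hs : s = t0 + (t0 + t0) := by field_simp at h; linear_combination h
      rw [hs]; exact m3
    · have hs : s = t0 + (t0 + (t0 + t0)) := by field_simp at h; linear_combination h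
      rw [hs]; exact m4
  have i2 : (2 : K)⁻¹ = 3 := inv_eq_of_mul_eq_one_right (by linear_combination h5)
  have i3 : (3 : K)⁻¹ = 2 := inv_eq_of_mul_eq_one_right (by linear_combination h5)
  have i4 : (4 : K)⁻¹ = 4 := inv_eq_of_mul_eq_one_right (by linear_combination 3 * h5)
  have hlw : ∀ s : K, lw s ∈ N := by
    by_cases hτ : τ = 0
    · -- trace zero: explicit conjugates over F5
      subst hτ
      have hXm : ∃ X : SL2 K, X ∈ N ∧ X.val = !![2, 1; 0, 3] := by
        refine ⟨⟨!![2, 1; 0, 3], by rw [det_fin_two_of]; linear_combination h5⟩, ?_, rfl⟩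
        rcases hnum c with h | h | h | h | h
        · exact absurd h hc
        · subst h
          refine conj_helper hN hcm (g := ⟨!![0, 2; 2, 1], by
            rw [det_fin_two_of]; linear_combination -h5⟩) ?_
          apply Subtype.ext
          erw [Matrix.SpecialLinearGroup.coe_mul, Matrix.SpecialLinearGroup.coe_mul]; simp only [cm]
          ext i j
          fin_cases i <;> fin_cases j <;>
            simp [Matrix.mul_apply, Fin.sum_univ_two, i2, i3, i4]
          all_goals try ring
          all_goals try linear_combination h5
          all_goals try linear_combination 2 * h5
          all_goals try linear_combination 3 * h5
          all_goals try linear_combination -h5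
          all_goals try linear_combination -2 * h5
          all_goals try linear_combination -3 * h5
          all_goals try linear_combination 4 * h5
          all_goals try linear_combination -4 * h5
          all_goals try linear_combination 5 * h5
          all_goals try linear_combination -5 * h5
        · subst h
          refine conj_helper hN hcm (g := ⟨!![1, 2; 4, 4], by
            rw [det_fin_two_of]; linear_combination -h5⟩) ?_
          apply Subtype.ext
          erw [Matrix.SpecialLinearGroup.coe_mul, Matrix.SpecialLinearGroup.coe_mul]; simp only [cm]
          ext i j
          fin_cases i <;> fin_cases j <;>
            simp [Matrix.mul_apply, Fin.sum_univ_two, i2, i3, i4]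
          all_goals try ring
          all_goals try linear_combination h5
          all_goals try linear_combination 2 * h5
          all_goals try linear_combination 3 * h5
          all_goals try linear_combination -h5
          all_goals try linear_combination -2 * h5
          all_goals try linear_combination -3 * h5
          all_goals try linear_combination 4 * h5
          all_goals try linear_combination -4 * h5
          all_goals try linear_combination 5 * h5
          all_goals try linear_combination -5 * h5
        · subst h
          refine conj_helper hN hcm (g := ⟨!![2, 1; 3, 2], by
            rw [det_fin_two_of]; norm_num⟩) ?_
          apply Subtype.ext
          erw [Matrix.SpecialLinearGroup.coe_mul, Matrix.SpecialLinearGroup.coe_mul]; simp only [cm]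
          ext i j
          fin_cases i <;> fin_cases j <;>
            simp [Matrix.mul_apply, Fin.sum_univ_two, i2, i3, i4]
          all_goals try ring
          all_goals try linear_combination h5
          all_goals try linear_combination 2 * h5
          all_goals try linear_combination 3 * h5
          all_goals try linear_combination -h5
          all_goals try linear_combination -2 * h5
          all_goals try linear_combination -3 * h5
          all_goals try linear_combination 4 * h5
          all_goals try linear_combination -4 * h5
          all_goals try linear_combination 5 * h5
          all_goals try linear_combination -5 * h5
        · subst h
          refine conj_helper hN hcm (g := ⟨!![0, 1; 4, 3], by
            rw [det_fin_two_of]; linear_combination -h5⟩) ?_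
          apply Subtype.ext
          erw [Matrix.SpecialLinearGroup.coe_mul, Matrix.SpecialLinearGroup.coe_mul]; simp only [cm]
          ext i j
          fin_cases i <;> fin_cases j <;>
            simp [Matrix.mul_apply, Fin.sum_univ_two, i2, i3, i4]
          all_goals try ring
          all_goals try linear_combination h5
          all_goals try linear_combination 2 * h5
          all_goals try linear_combination 3 * h5
          all_goals try linear_combination -h5
          all_goals try linear_combination -2 * h5
          all_goals try linear_combination -3 * h5
          all_goals try linear_combination 4 * h5
          all_goals try linear_combination -4 * h5
          all_goals try linear_combination 5 * h5
          all_goals try linear_combination -5 * h5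
      have hYm : ∃ Y : SL2 K, Y ∈ N ∧ Y.val = !![3, 2; 0, 2] := by
        refine ⟨⟨!![3, 2; 0, 2], by rw [det_fin_two_of]; linear_combination h5⟩, ?_, rfl⟩
        rcases hnum c with h | h | h | h | h
        · exact absurd h hc
        · subst h
          refine conj_helper hN hcm (g := ⟨!![2, 2; 3, 1], by
            rw [det_fin_two_of]; linear_combination -h5⟩) ?_
          apply Subtype.ext
          erw [Matrix.SpecialLinearGroup.coe_mul, Matrix.SpecialLinearGroup.coe_mul]; simp only [cm]
          ext i j
          fin_cases i <;> fin_cases j <;>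
            simp [Matrix.mul_apply, Fin.sum_univ_two, i2, i3, i4]
          all_goals try ring
          all_goals try linear_combination h5
          all_goals try linear_combination 2 * h5
          all_goals try linear_combination 3 * h5
          all_goals try linear_combination -h5
          all_goals try linear_combination -2 * h5
          all_goals try linear_combination -3 * h5
          all_goals try linear_combination 4 * h5
          all_goals try linear_combination -4 * h5
          all_goals try linear_combination 5 * h5
          all_goals try linear_combination -5 * h5
        · subst h
          refine conj_helper hN hcm (g := ⟨!![0, 1; 4, 1], by
            rw [det_fin_two_of]; linear_combination -h5⟩) ?_
          apply Subtype.ext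
          erw [Matrix.SpecialLinearGroup.coe_mul, Matrix.SpecialLinearGroup.coe_mul]; simp only [cm]
          ext i j
          fin_cases i <;> fin_cases j <;>
            simp [Matrix.mul_apply, Fin.sum_univ_two, i2, i3, i4]
          all_goals try ring
          all_goals try linear_combination h5
          all_goals try linear_combination 2 * h5
          all_goals try linear_combination 3 * h5
          all_goals try linear_combination -h5
          all_goals try linear_combination -2 * h5
          all_goals try linear_combination -3 * h5
          all_goals try linear_combination 4 * h5
          all_goals try linear_combination -4 * h5
          all_goals try linear_combination 5 * h5
          all_goals try linear_combination -5 * h5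
        · subst h
          refine conj_helper hN hcm (g := ⟨!![0, 2; 2, 2], by
            rw [det_fin_two_of]; linear_combination -h5⟩) ?_
          apply Subtype.ext
          erw [Matrix.SpecialLinearGroup.coe_mul, Matrix.SpecialLinearGroup.coe_mul]; simp only [cm]
          ext i j
          fin_cases i <;> fin_cases j <;>
            simp [Matrix.mul_apply, Fin.sum_univ_two, i2, i3, i4]
          all_goals try ring
          all_goals try linear_combination h5
          all_goals try linear_combination 2 * h5
          all_goals try linear_combination 3 * h5
          all_goals try linear_combination -h5
          all_goals try linear_combination -2 * h5
          all_goals try linear_combination -3 * h5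
          all_goals try linear_combination 4 * h5
          all_goals try linear_combination -4 * h5
          all_goals try linear_combination 5 * h5
          all_goals try linear_combination -5 * h5
        · subst h
          refine conj_helper hN hcm (g := ⟨!![1, 1; 3, 4], by
            rw [det_fin_two_of]; norm_num⟩) ?_
          apply Subtype.ext
          erw [Matrix.SpecialLinearGroup.coe_mul, Matrix.SpecialLinearGroup.coe_mul]; simp only [cm]
          ext i j
          fin_cases i <;> fin_cases j <;>
            simp [Matrix.mul_apply, Fin.sum_univ_two, i2, i3, i4]
          all_goals try ring
          all_goals try linear_combination h5
          all_goals try linear_combination 2 * h5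
          all_goals try linear_combination 3 * h5
          all_goals try linear_combination -h5
          all_goals try linear_combination -2 * h5
          all_goals try linear_combination -3 * h5
          all_goals try linear_combination 4 * h5
          all_goals try linear_combination -4 * h5
          all_goals try linear_combination 5 * h5
          all_goals try linear_combination -5 * h5
      have hu1 : u (1 : K) ∈ N := by
        obtain ⟨X, hXN, hXv⟩ := hXm
        obtain ⟨Y, hYN, hYv⟩ := hYm
        have hXY : X * Y = u (1 : K) := by
          apply Subtype.ext
          simp only [u, Matrix.SpecialLinearGroup.coe_mul, hXv, hYv]
          ext i j
          fin_cases i <;> fin_cases j <;>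
            simp [Matrix.mul_apply, Fin.sum_univ_two]
          all_goals try ring
          all_goals try linear_combination h5
          all_goals try linear_combination 2 * h5
        rw [← hXY]
        exact N.mul_mem hXN hYN
      have hlm1 : lw (-1 : K) ∈ N := conj_helper' hN hu1 (u_wm 1)
      intro s
      exact hfive (-1) (neg_ne_zero.mpr one_ne_zero) hlm1 s
    · -- trace nonzero: square of the D-element is a nontrivial lw
      have hD := Dmem hN hcm h2
      have i4' : (((2 : K) ^ 2))⁻¹ = 4 := by
        rw [show ((2 : K) ^ 2) = 4 by norm_num]
        exact i4
      have hT2 : lt ((2 : K) ^ 2) (τ * c⁻¹ * (((2 : K)⁻¹) ^ 2 - 1)) (pow_ne_zero 2 h2) *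
          lt ((2 : K) ^ 2) (τ * c⁻¹ * (((2 : K)⁻¹) ^ 2 - 1)) (pow_ne_zero 2 h2)
          = lw (4 * τ * c⁻¹) := by
        apply Subtype.ext
        simp only [Matrix.SpecialLinearGroup.coe_mul]; simp only [lt, lw]
        ext i j
        fin_cases i <;> fin_cases j <;>
          simp [Matrix.mul_apply, Fin.sum_univ_two, i2, i4']
        all_goals try linear_combination 3 * h5
        all_goals try linear_combination (12 * τ * c⁻¹) * h5
      have h4 : (4 : K) ≠ 0 := by
        intro h
        exact one_ne_zero (α := K) (by linear_combination h5 - h)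
      have ht0 : 4 * τ * c⁻¹ ≠ 0 := by
        exact mul_ne_zero (mul_ne_zero h4 hτ) (inv_ne_zero hc)
      have hl0 : lw (4 * τ * c⁻¹) ∈ N := by
        rw [← hT2]; exact N.mul_mem hD hD
      exact hfive _ ht0 hl0
  exact eq_top hN hlw


end Stmt2Aux

/- STATEMENT 2: If K is a field with more than 3 elements, then
PSL(2,K) = SL(2,K)/{±I} = SL(2,K)/center is a simple group (Dieudonné). -/
theorem stmt2 (K : Type*) [Field K] (hK : 3 < Cardinal.mk K) :
    IsSimpleGroup (Matrix.SpecialLinearGroup (Fin 2) K ⧸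
      Subgroup.center (Matrix.SpecialLinearGroup (Fin 2) K)) := by
  open Stmt2Aux in
  have hnt : Nontrivial (Matrix.SpecialLinearGroup (Fin 2) K ⧸
      Subgroup.center (Matrix.SpecialLinearGroup (Fin 2) K)) := by
    refine ⟨QuotientGroup.mk (Stmt2Aux.u (1 : K)), 1, ?_⟩
    intro h
    have hu1 : Stmt2Aux.u (1:K) ∈ Subgroup.center (Matrix.SpecialLinearGroup (Fin 2) K) :=
      (QuotientGroup.eq_one_iff _).mp h
    have hcomm := Subgroup.mem_center_iff.mp hu1 (Stmt2Aux.lw 1)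
    have e := congrArg (fun M : Matrix.SpecialLinearGroup (Fin 2) K => M.val 0 0) hcomm
    simp only [Matrix.SpecialLinearGroup.coe_mul] at e; simp only [Stmt2Aux.u, Stmt2Aux.lw] at e
    simp [Matrix.mul_apply, Fin.sum_univ_two] at e
    all_goals try exact one_ne_zero (α := K) (by linear_combination -e)
    all_goals try exact one_ne_zero (α := K) (by linear_combination e)
  haveI := hnt
  refine ⟨fun H hH => ?_⟩
  by_cases hb : H = ⊥
  · exact Or.inl hb
  right
  obtain ⟨q, hqH, hq1⟩ : ∃ q ∈ H, q ≠ 1 := by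
    by_contra hco
    push_neg at hco
    exact hb ((Subgroup.eq_bot_iff_forall H).mpr hco)
  obtain ⟨A, rfl⟩ := QuotientGroup.mk'_surjective
    (Subgroup.center (Matrix.SpecialLinearGroup (Fin 2) K)) q
  have hAZ : A ∉ Subgroup.center (Matrix.SpecialLinearGroup (Fin 2) K) := by
    intro h
    exact hq1 ((QuotientGroup.eq_one_iff A).mpr h)
  have hAN : A ∈ Subgroup.comap
      (QuotientGroup.mk' (Subgroup.center (Matrix.SpecialLinearGroup (Fin 2) K))) H := hqH
  have hNnormal : (Subgroup.comap
      (QuotientGroup.mk' (Subgroup.center (Matrix.SpecialLinearGroup (Fin 2) K))) H).Normal :=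
    Subgroup.Normal.comap hH _
  have hall := Stmt2Aux.key hK hNnormal hAN hAZ
  rw [Subgroup.eq_top_iff']
  intro x
  obtain ⟨B, rfl⟩ := QuotientGroup.mk'_surjective
    (Subgroup.center (Matrix.SpecialLinearGroup (Fin 2) K)) x
  exact hall B
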